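/- (Theorem 2.2) An element f of the Heisenberg algebra H is invertible if and only if it lies in the field of scalars: if f ∈ H and there exists g ∈ H with f ∘ g = 1 and g ∘ f = 1 (where 1 is the identity operator), then f = c • 1 for some scalar c ∈ ℂ; conversely every nonzero scalar multiple of the identity is invertible in H. -/

import Mathlib

open Polynomial

/-- Multiplication by X on ℂ[X]. -/
noncomputable def M : Module.End ℂ (Polynomial ℂ) := LinearMap.mulLeft ℂ Polynomial.X

/-- Formal derivative on ℂ[X]. -/
noncomputable def D : Module.End ℂ (Polynomial ℂ) := Polynomial.derivative

namespace HAux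

/-- `f` is represented as `∑ b ≤ B, p b * derivative^[b]`. -/
def Rep (f : Module.End ℂ (Polynomial ℂ)) (B : ℕ) (p : ℕ → Polynomial ℂ) : Prop :=
  (∀ b, B < b → p b = 0) ∧
  ∀ u : Polynomial ℂ, f u = ∑ b ∈ Finset.range (B + 1), p b * Polynomial.derivative^[b] u

lemma rep_mono {f B p B₂} (h : Rep f B p) (hB : B ≤ B₂) : Rep f B₂ p := by
  refine ⟨fun b hb => h.1 b (lt_of_le_of_lt hB hb), fun u => ?_⟩
  rw [h.2 u]
  refine Finset.sum_subset (by intro x hx; simp_all; omega) ?_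
  intro x _ hx
  simp only [Finset.mem_range, not_lt] at hx
  rw [h.1 x (by omega), zero_mul]

lemma rep_add {f g B p q} (hf : Rep f B p) (hg : Rep g B q) :
    Rep (f + g) B (fun b => p b + q b) := by
  refine ⟨fun b hb => by show p b + q b = 0; rw [hf.1 b hb, hg.1 b hb, add_zero], fun u => ?_⟩
  simp [hf.2 u, hg.2 u, add_mul, Finset.sum_add_distrib]

lemma rep_D_comp {g B q} (hg : Rep g B q) :
    Rep (D * g) (B + 1)
      (fun b => Polynomial.derivative (q b) + if b = 0 then 0 else q (b - 1)) := by
  constructor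
  · intro b hb
    show Polynomial.derivative (q b) + (if b = 0 then 0 else q (b - 1)) = 0
    rw [hg.1 b (by omega), map_zero, zero_add]
    have hb0 : b ≠ 0 := by omega
    rw [if_neg hb0, hg.1 (b - 1) (by omega)]
  · intro u
    have : (D * g) u = Polynomial.derivative (g u) := rfl
    rw [this, hg.2 u, map_sum]
    have step : ∀ b : ℕ, Polynomial.derivative (q b * Polynomial.derivative^[b] u)
        = Polynomial.derivative (q b) * Polynomial.derivative^[b] u
          + q b * Polynomial.derivative^[b + 1] u := by
      intro b
      rw [Polynomial.derivative_mul, Function.iterate_succ_apply']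
    simp only [step]
    rw [Finset.sum_add_distrib]
    have h1 : ∑ b ∈ Finset.range (B + 1 + 1),
        Polynomial.derivative (q b) * Polynomial.derivative^[b] u
        = ∑ b ∈ Finset.range (B + 1),
          Polynomial.derivative (q b) * Polynomial.derivative^[b] u := by
      rw [Finset.sum_range_succ, hg.1 (B + 1) (by omega), map_zero, zero_mul, add_zero]
    have h2 : ∑ b ∈ Finset.range (B + 1 + 1),
          (if b = 0 then 0 else q (b - 1)) * Polynomial.derivative^[b] u
        = ∑ b ∈ Finset.range (B + 1), q b * Polynomial.derivative^[b + 1] u := by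
      rw [Finset.sum_range_succ']
      simp
    rw [← h1, ← h2, ← Finset.sum_add_distrib]
    apply Finset.sum_congr rfl
    intro b _
    show Polynomial.derivative (q b) * _ + _ = (Polynomial.derivative (q b) + _) * _
    rw [add_mul]

lemma rep_mulLeft_comp {g B q} (w : Polynomial ℂ) (hg : Rep g B q) :
    Rep (LinearMap.mulLeft ℂ w * g) B (fun b => w * q b) := by
  refine ⟨fun b hb => by show w * q b = 0; rw [hg.1 b hb, mul_zero], fun u => ?_⟩
  have : (LinearMap.mulLeft ℂ w * g) u = w * g u := rfl
  rw [this, hg.2 u, Finset.mul_sum]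
  simp [mul_assoc]

lemma rep_mul (B : ℕ) : ∀ (f : Module.End ℂ (Polynomial ℂ)) (p : ℕ → Polynomial ℂ),
    Rep f B p → ∀ (g : Module.End ℂ (Polynomial ℂ)) (B' : ℕ) (q : ℕ → Polynomial ℂ),
    Rep g B' q → ∃ r, Rep (f * g) (B + B') r ∧ r (B + B') = p B * q B' := by
  induction B with
  | zero =>
    intro f p hf g B' q hg
    refine ⟨fun b => p 0 * q b, ?_, by show p 0 * q (0 + B') = p 0 * q B'; rw [Nat.zero_add]⟩
    have hf0 : f = LinearMap.mulLeft ℂ (p 0) := by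
      apply LinearMap.ext; intro u
      rw [hf.2 u]
      simp [LinearMap.mulLeft_apply]
    rw [hf0, Nat.zero_add]
    exact rep_mulLeft_comp (p 0) hg
  | succ B ih =>
    intro f p hf g B' q hg
    -- h := ∑ b ≤ B, mulLeft (p (b+1)) * D^b
    set h : Module.End ℂ (Polynomial ℂ) :=
      ∑ b ∈ Finset.range (B + 1), LinearMap.mulLeft ℂ (p (b + 1)) * D ^ b with hh
    have hhrep : Rep h B (fun b => p (b + 1)) := by
      refine ⟨fun b hb => hf.1 (b + 1) (by omega), fun u => ?_⟩
      rw [hh]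
      rw [LinearMap.sum_apply]
      apply Finset.sum_congr rfl
      intro b _
      have : (LinearMap.mulLeft ℂ (p (b + 1)) * D ^ b) u
          = p (b + 1) * (D ^ b) u := rfl
      rw [this, Module.End.pow_apply]
      rfl
    have hsplit : f = LinearMap.mulLeft ℂ (p 0) + h * D := by
      apply LinearMap.ext; intro u
      have lhs : f u = p 0 * u
          + ∑ b ∈ Finset.range (B + 1), p (b + 1) * Polynomial.derivative^[b + 1] u := by
        rw [hf.2 u, Finset.sum_range_succ', Function.iterate_zero_apply]
        exact add_comm _ _
      have rhs : (LinearMap.mulLeft ℂ (p 0) + h * D) u = p 0 * u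
          + ∑ b ∈ Finset.range (B + 1), p (b + 1) * Polynomial.derivative^[b + 1] u := by
        have e1 : (LinearMap.mulLeft ℂ (p 0) + h * D) u = p 0 * u + h (D u) := rfl
        rw [e1, hhrep.2 (D u)]
        rfl
      rw [lhs, rhs]
    have hDg := rep_D_comp hg
    obtain ⟨r', hr', hr'top⟩ := ih h (fun b => p (b + 1)) hhrep (D * g) (B' + 1) _ hDg
    have htop' : r' (B + (B' + 1)) = p (B + 1) * q B' := by
      rw [hr'top]
      simp [hg.1 (B' + 1) (by omega)]
    have hmg := rep_mono (rep_mulLeft_comp (p 0) hg) (show B' ≤ B + (B' + 1) by omega)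
    have hsum := rep_add hmg hr'
    have hfg : f * g = LinearMap.mulLeft ℂ (p 0) * g + h * (D * g) := by
      rw [hsplit, add_mul, mul_assoc]
    refine ⟨fun b => p 0 * q b + r' b, ?_, ?_⟩
    · have : B + 1 + B' = B + (B' + 1) := by omega
      rw [this, hfg]
      exact hsum
    · show p 0 * q (B + 1 + B') + r' (B + 1 + B') = p (B + 1) * q B'
      have h1 : q (B + 1 + B') = 0 := hg.1 _ (by omega)
      have h2 : B + 1 + B' = B + (B' + 1) := by omega
      rw [h1, mul_zero, zero_add, h2, htop']

lemma rep_zero {B p} (h : Rep 0 B p) : ∀ b, p b = 0 := by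
  intro b
  induction b using Nat.strong_induction_on with
  | _ b ih =>
    by_cases hb : B < b
    · exact h.1 b hb
    push_neg at hb
    have h0 := h.2 (X ^ b)
    rw [LinearMap.zero_apply] at h0
    rw [Finset.sum_eq_single b] at h0
    · rw [Polynomial.iterate_derivative_X_pow_eq_smul, Nat.sub_self, pow_zero,
        Nat.descFactorial_self] at h0
      have hfac : ((b.factorial : ℂ) • (1 : Polynomial ℂ)) ≠ 0 := by
        simp [Nat.factorial_ne_zero]
      rcases mul_eq_zero.mp h0.symm with h' | h'
      · exact h'
      · exact absurd h' hfac
    · intro c hc hcb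
      rcases lt_or_gt_of_ne hcb with hlt | hgt
      · rw [ih c hlt, zero_mul]
      · rw [Polynomial.iterate_derivative_X_pow_eq_smul,
          Nat.descFactorial_eq_zero_iff_lt.mpr hgt]
        simp
    · intro hbmem
      exact absurd (Finset.mem_range.mpr (by omega)) hbmem

lemma rep_unique {f B p q} (hp : Rep f B p) (hq : Rep f B q) : ∀ b, p b = q b := by
  have : Rep 0 B (fun b => p b - q b) := by
    refine ⟨fun b hb => by show p b - q b = 0; rw [hp.1 b hb, hq.1 b hb, sub_zero], fun u => ?_⟩
    simp only [sub_mul, Finset.sum_sub_distrib, ← hp.2 u, ← hq.2 u]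
    simp
  intro b
  have := rep_zero this b
  simp only [sub_eq_zero] at this
  exact this

lemma rep_exists {f : Module.End ℂ (Polynomial ℂ)}
    (hf : f ∈ Algebra.adjoin ℂ ({M, D} : Set (Module.End ℂ (Polynomial ℂ)))) :
    ∃ B p, Rep f B p := by
  induction hf using Algebra.adjoin_induction with
  | mem x hx =>
    rcases hx with hx | hx
    · subst hx
      exact ⟨0, fun b => if b = 0 then X else 0, fun b hb => if_neg (by omega), fun u => by
        simp [M, LinearMap.mulLeft_apply]⟩
    · simp only [Set.mem_singleton_iff] at hx
      subst hx
      refine ⟨1, fun b => if b = 1 then 1 else 0, fun b hb => if_neg (by omega), fun u => ?_⟩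
      rw [Finset.sum_range_succ, Finset.sum_range_one]
      simp [D]
  | algebraMap c =>
    refine ⟨0, fun b => if b = 0 then Polynomial.C c else 0,
      fun b hb => if_neg (by omega), fun u => ?_⟩
    simp [Module.algebraMap_end_apply, Polynomial.smul_eq_C_mul]
  | add x y hx hy ihx ihy =>
    obtain ⟨B1, p1, h1⟩ := ihx
    obtain ⟨B2, p2, h2⟩ := ihy
    exact ⟨max B1 B2, _, rep_add (rep_mono h1 (le_max_left _ _)) (rep_mono h2 (le_max_right _ _))⟩
  | mul x y hx hy ihx ihy =>
    obtain ⟨B1, p1, h1⟩ := ihx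
    obtain ⟨B2, p2, h2⟩ := ihy
    obtain ⟨r, hr, -⟩ := rep_mul B1 x p1 h1 y B2 p2 h2
    exact ⟨_, _, hr⟩

lemma rep_trim : ∀ (B : ℕ) (f : Module.End ℂ (Polynomial ℂ)) (p), Rep f B p → f ≠ 0 →
    ∃ B₀, Rep f B₀ p ∧ p B₀ ≠ 0 := by
  intro B
  induction B with
  | zero =>
    intro f p hp hf
    refine ⟨0, hp, fun h0 => hf ?_⟩
    apply LinearMap.ext; intro u
    rw [hp.2 u]
    simp [h0]
  | succ B ih =>
    intro f p hp hf
    by_cases htop : p (B + 1) = 0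
    · have hrep : Rep f B p := by
        refine ⟨fun b hb => ?_, fun u => ?_⟩
        · rcases Nat.lt_or_ge (B + 1) b with h | h
          · exact hp.1 b h
          · have : b = B + 1 := by omega
            rw [this]; exact htop
        · rw [hp.2 u, Finset.sum_range_succ, htop, zero_mul, add_zero]
      exact ih f p hrep hf
    · exact ⟨B + 1, hp, htop⟩

lemma rep_one : Rep 1 0 (fun b => if b = 0 then 1 else 0) := by
  refine ⟨fun b hb => if_neg (by omega), fun u => ?_⟩
  simp

end HAux

/-- Theorem 2.2: an element of the Heisenberg algebra is invertible iff it is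
a scalar. -/
theorem heisenberg_invertible_iff_scalar :
    (∀ f ∈ Algebra.adjoin ℂ ({M, D} : Set (Module.End ℂ (Polynomial ℂ))),
      (∃ g ∈ Algebra.adjoin ℂ ({M, D} : Set (Module.End ℂ (Polynomial ℂ))),
          f * g = 1 ∧ g * f = 1) →
        ∃ c : ℂ, f = c • (1 : Module.End ℂ (Polynomial ℂ))) ∧
    (∀ c : ℂ, c ≠ 0 →
      (c • (1 : Module.End ℂ (Polynomial ℂ))) ∈
          Algebra.adjoin ℂ ({M, D} : Set (Module.End ℂ (Polynomial ℂ))) ∧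
      ∃ g ∈ Algebra.adjoin ℂ ({M, D} : Set (Module.End ℂ (Polynomial ℂ))),
        (c • (1 : Module.End ℂ (Polynomial ℂ))) * g = 1 ∧
        g * (c • (1 : Module.End ℂ (Polynomial ℂ))) = 1) := by

  constructor
  · rintro f hf ⟨g, hg, hfg, hgf⟩
    have hf0 : f ≠ 0 := by
      intro h; rw [h, zero_mul] at hfg; exact one_ne_zero hfg.symm
    have hg0 : g ≠ 0 := by
      intro h; rw [h, mul_zero] at hfg; exact one_ne_zero hfg.symm
    obtain ⟨B, p, hp⟩ := HAux.rep_exists hf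
    obtain ⟨B', q, hq⟩ := HAux.rep_exists hg
    obtain ⟨Bf, hpf, hpf0⟩ := HAux.rep_trim B f p hp hf0
    obtain ⟨Bg, hqg, hqg0⟩ := HAux.rep_trim B' g q hq hg0
    obtain ⟨r, hr, hrtop⟩ := HAux.rep_mul Bf f p hpf g Bg q hqg
    rw [hfg] at hr
    have hone := HAux.rep_mono HAux.rep_one (Nat.zero_le (Bf + Bg))
    have huni := HAux.rep_unique hr hone (Bf + Bg)
    have hne : r (Bf + Bg) ≠ 0 := by rw [hrtop]; exact mul_ne_zero hpf0 hqg0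
    have hBfg : Bf + Bg = 0 := by
      by_contra hb
      rw [huni, if_neg hb] at hne
      exact hne rfl
    have hBf : Bf = 0 := by omega
    subst hBf
    have happ : p 0 * g 1 = 1 := by
      have h1 : (f * g) (1 : Polynomial ℂ) = 1 := by rw [hfg]; rfl
      have h2 : (f * g) (1 : Polynomial ℂ) = f (g 1) := rfl
      have h3 : f (g 1) = p 0 * g 1 := by
        rw [hpf.2 (g 1)]
        simp
      rw [h2, h3] at h1
      exact h1
    obtain ⟨c, hcu, hc⟩ := Polynomial.isUnit_iff.mp (IsUnit.of_mul_eq_one _ happ)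
    refine ⟨c, ?_⟩
    apply LinearMap.ext; intro u
    rw [hpf.2 u]
    simp [← hc, Polynomial.smul_eq_C_mul]
  · intro c hc
    refine ⟨?_, c⁻¹ • 1, ?_, ?_, ?_⟩
    · rw [← Algebra.algebraMap_eq_smul_one]
      exact Subalgebra.algebraMap_mem _ c
    · rw [← Algebra.algebraMap_eq_smul_one]
      exact Subalgebra.algebraMap_mem _ _
    · rw [smul_mul_assoc, one_mul, smul_smul, mul_inv_cancel₀ hc, one_smul]
    · rw [smul_mul_assoc, one_mul, smul_smul, inv_mul_cancel₀ hc, one_smul]
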